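/- (Han–Hoshi bound.) Let (p_i)_{i≥1} be a probability vector and let (α_i)_{i≥1}, (β_i)_{i≥1} be nonnegative sequences with α_i + β_i = p_i for every i. For each i let ((α_i)_j)_{j≥1} and ((β_i)_j)_{j≥1} be binary expansions of α_i and β_i (digits in {0,1}, α_i = Σ_j (α_i)_j 2^{−j}, β_i = Σ_j (β_i)_j 2^{−j}). Then the quantity E(T) = Σ_i Σ_{j=1}^∞ j·((α_i)_j + (β_i)_j)·2^{−j} satisfies Σ_i p_i·log₂(1/p_i) ≤ E(T) ≤ Σ_i p_i·log₂(1/p_i) + 3. -/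

import Mathlib

open Real

lemma hh_chord {δ : ℝ} (h0 : 0 ≤ δ) (h1 : δ ≤ 1) : (2:ℝ) ^ (-δ) ≤ 1 - δ/2 := by
  have h2 : (2:ℝ) ^ (-δ) = Real.exp ((1-δ) • (0:ℝ) + δ • (-Real.log 2)) := by
    rw [Real.rpow_def_of_pos (by norm_num)]
    congr 1
    simp [smul_eq_mul]; ring
  rw [h2]
  have := convexOn_exp.2 (Set.mem_univ (0:ℝ)) (Set.mem_univ (-Real.log 2))
    (show (0:ℝ) ≤ 1 - δ by linarith) h0 (by ring)
  refine this.trans_eq ?_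
  rw [smul_eq_mul, smul_eq_mul, Real.exp_zero, Real.exp_neg, Real.exp_log (by norm_num)]
  ring

lemma hh_mono {x q : ℝ} (hx : 0 ≤ x) (hxq : x ≤ q) :
    x * Real.logb 2 (1/q) ≤ x * Real.logb 2 (1/x) := by
  rcases eq_or_lt_of_le hx with h | hx'
  · simp [← h]
  · have hq : 0 < q := lt_of_lt_of_le hx' hxq
    have h : Real.logb 2 (1/q) ≤ Real.logb 2 (1/x) :=
      Real.logb_le_logb_of_le one_lt_two (by positivity)
        (one_div_le_one_div_of_le hx' hxq)
    exact mul_le_mul_of_nonneg_left h hx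

lemma hh_split {al be : ℝ} (hal : 0 ≤ al) (hbe : 0 ≤ be) :
    al * Real.logb 2 (1/al) + be * Real.logb 2 (1/be)
      ≤ (al+be) * Real.logb 2 (1/(al+be)) + (al+be) := by
  rcases eq_or_lt_of_le hal with h | hal'
  · rw [← h]; simp; linarith
  rcases eq_or_lt_of_le hbe with h | hbe'
  · rw [← h]; simp; linarith
  have hp : 0 < al + be := by linarith
  have hpne : al + be ≠ 0 := ne_of_gt hp
  have hlog2 : (0:ℝ) < Real.log 2 := Real.log_pos (by norm_num)
  have hs1 : 1 - al/(al+be) = be/(al+be) := by field_simp; ring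
  have e1 : Real.log (1/al) = Real.log ((al+be)/al) + Real.log (1/(al+be)) := by
    rw [← Real.log_mul (by positivity) (by positivity)]
    congr 1; field_simp
  have e2 : Real.log (1/be) = Real.log ((al+be)/be) + Real.log (1/(al+be)) := by
    rw [← Real.log_mul (by positivity) (by positivity)]
    congr 1; field_simp
  have expand : al * Real.log (1/al) + be * Real.log (1/be)
      = (al+be) * Real.log (1/(al+be)) + (al+be) * Real.binEntropy (al/(al+be)) := by
    rw [Real.binEntropy, hs1, inv_div, inv_div, e1, e2]
    field_simp
    ring
  have key : Real.binEntropy (al/(al+be)) ≤ Real.log 2 := Real.binEntropy_le_log_two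
  have goal' : al * Real.log (1/al) + be * Real.log (1/be)
      ≤ (al+be) * Real.log (1/(al+be)) + (al+be) * Real.log 2 := by
    rw [expand]; nlinarith
  calc al * Real.logb 2 (1/al) + be * Real.logb 2 (1/be)
      = (al * Real.log (1/al) + be * Real.log (1/be)) / Real.log 2 := by
        simp only [Real.logb]; ring
    _ ≤ ((al+be) * Real.log (1/(al+be)) + (al+be) * Real.log 2) / Real.log 2 := by gcongr
    _ = (al+be) * Real.logb 2 (1/(al+be)) + (al+be) := by
        simp only [Real.logb]; field_simp

section HH
variable {d : ℕ → ℝ}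

lemma hh_d01 (hd : ∀ j, d j = 0 ∨ d j = 1) (j : ℕ) : 0 ≤ d j ∧ d j ≤ 1 := by
  rcases hd j with h | h <;> simp [h]

lemma hh_geo_shift (k : ℕ) : ∑' m : ℕ, ((1:ℝ)/2)^(m+k) = 2 * (1/2)^k := by
  have : ∀ m : ℕ, ((1:ℝ)/2)^(m+k) = (1/2)^m * (1/2)^k := fun m => pow_add _ _ _
  rw [tsum_congr this, tsum_mul_right, tsum_geometric_two]

lemma hh_sumf (hd : ∀ j, d j = 0 ∨ d j = 1) : Summable (fun j => d j / 2^(j+1)) := by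
  apply Summable.of_nonneg_of_le (fun j : ℕ => by have := (hh_d01 hd j).1; positivity)
    (f := fun j => ((1:ℝ)/2)^j) (fun j : ℕ => ?_) summable_geometric_two
  have h1 := (hh_d01 hd j).2
  calc d j / 2^(j+1) ≤ 1 / 2^(j+1) := by gcongr
    _ = ((1:ℝ)/2)^(j+1) := by rw [div_pow, one_pow]
    _ ≤ ((1:ℝ)/2)^j := pow_le_pow_of_le_one (by norm_num) (by norm_num) (Nat.le_succ j)

lemma hh_sumS (hd : ∀ j, d j = 0 ∨ d j = 1) :
    Summable (fun j : ℕ => ((j:ℝ)+1) * d j / 2^(j+1)) := by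
  have h1 : Summable (fun m : ℕ => (m:ℝ) * (1/2)^m) := by
    simpa using summable_pow_mul_geometric_of_norm_lt_one 1 (r := (1/2:ℝ)) (by norm_num)
  have hg : Summable (fun j : ℕ => ((j:ℝ)+1) * (1/2)^(j+1)) := by
    have := (summable_nat_add_iff 1).2 h1
    simpa using this
  apply Summable.of_nonneg_of_le (fun j : ℕ => by have := (hh_d01 hd j).1; positivity)
    (fun j : ℕ => ?_) hg
  have h1 := (hh_d01 hd j).2
  have h0 := (hh_d01 hd j).1
  calc ((j:ℝ)+1) * d j / 2^(j+1) ≤ ((j:ℝ)+1) * 1 / 2^(j+1) := by gcongr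
    _ = ((j:ℝ)+1) * (1/2)^(j+1) := by rw [div_pow, one_pow]; ring

lemma hh_x_le_one (hd : ∀ j, d j = 0 ∨ d j = 1) : (∑' j : ℕ, d j / 2^(j+1)) ≤ 1 := by
  have hgs : Summable (fun j : ℕ => ((1:ℝ)/2)^(j+1)) :=
    (summable_nat_add_iff 1).2 summable_geometric_two
  have h := Summable.tsum_le_tsum (f := fun j : ℕ => d j / 2^(j+1)) (g := fun j => ((1:ℝ)/2)^(j+1))
    (fun j => by
      have h1 := (hh_d01 hd j).2
      calc d j / 2^(j+1) ≤ 1 / 2^(j+1) := by gcongr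
        _ = ((1:ℝ)/2)^(j+1) := by rw [div_pow, one_pow])
    (hh_sumf hd) hgs
  refine h.trans ?_
  have := hh_geo_shift 1
  rw [this]; norm_num


lemma hh_x_nonneg (hd : ∀ j, d j = 0 ∨ d j = 1) : 0 ≤ (∑' j : ℕ, d j / 2^(j+1)) :=
  tsum_nonneg (fun j => by have := (hh_d01 hd j).1; positivity)

lemma hh_term_le_x (hd : ∀ j, d j = 0 ∨ d j = 1) (j : ℕ) :
    d j / 2^(j+1) ≤ (∑' j : ℕ, d j / 2^(j+1)) :=
  Summable.le_tsum (hh_sumf hd) j (fun k _ => by have := (hh_d01 hd k).1; positivity)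

lemma hh_lower (hd : ∀ j, d j = 0 ∨ d j = 1) :
    (∑' j : ℕ, d j / 2^(j+1)) * Real.logb 2 (1/(∑' j : ℕ, d j / 2^(j+1)))
      ≤ ∑' j : ℕ, ((j:ℝ)+1) * d j / 2^(j+1) := by
  set x := ∑' j : ℕ, d j / 2^(j+1) with hx
  have hterm : ∀ j : ℕ, (d j / 2^(j+1)) * Real.logb 2 (1/x)
      ≤ ((j:ℝ)+1) * d j / 2^(j+1) := by
    intro j
    rcases hd j with h | h
    · simp [h]
    · rw [h]
      have hxlb : (1:ℝ)/2^(j+1) ≤ x := by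
        have := hh_term_le_x hd j; rwa [h] at this
      have hxpos : 0 < x := lt_of_lt_of_le (by positivity) hxlb
      have h1 : Real.logb 2 (1/x) ≤ ((j:ℝ)+1) := by
        have hle : (1:ℝ)/x ≤ 2^(j+1) := by
          rw [div_le_iff₀ hxpos]
          calc (1:ℝ) = 2^(j+1) * (1/2^(j+1)) := by field_simp
            _ ≤ 2^(j+1) * x := by gcongr
        calc Real.logb 2 (1/x) ≤ Real.logb 2 (2^(j+1)) :=
              Real.logb_le_logb_of_le one_lt_two (by positivity) hle
          _ = ((j:ℝ)+1) := by
              rw [Real.logb_pow, Real.logb_self_eq_one one_lt_two]; push_cast; ring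
      calc (1 / 2^(j+1)) * Real.logb 2 (1/x) = Real.logb 2 (1/x) / 2^(j+1) := by ring
        _ ≤ ((j:ℝ)+1) / 2^(j+1) := by gcongr
        _ = ((j:ℝ)+1) * 1 / 2^(j+1) := by ring
  calc x * Real.logb 2 (1/x) = ∑' j : ℕ, (d j / 2^(j+1)) * Real.logb 2 (1/x) :=
        tsum_mul_right.symm
    _ ≤ ∑' j : ℕ, ((j:ℝ)+1) * d j / 2^(j+1) :=
        Summable.tsum_le_tsum hterm ((hh_sumf hd).mul_right _) (hh_sumS hd)

noncomputable def hhF (d : ℕ → ℝ) (t j : ℕ) : ℝ := if t ≤ j then d j / 2^(j+1) else 0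

lemma hh_upper (hd : ∀ j, d j = 0 ∨ d j = 1) :
    (∑' j : ℕ, ((j:ℝ)+1) * d j / 2^(j+1))
      ≤ (∑' j : ℕ, d j / 2^(j+1)) * Real.logb 2 (1/(∑' j : ℕ, d j / 2^(j+1)))
        + 2 * (∑' j : ℕ, d j / 2^(j+1)) := by
  set x := ∑' j : ℕ, d j / 2^(j+1) with hxdef
  rcases eq_or_lt_of_le (show (0:ℝ) ≤ x from hh_x_nonneg hd) with hx0 | hxpos
  · have hz : ∀ j : ℕ, d j = 0 := by
      intro j
      have h1 : d j / 2^(j+1) ≤ (0:ℝ) := (hh_term_le_x hd j).trans (le_of_eq hx0.symm)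
      have h2 : (0:ℝ) ≤ d j / 2^(j+1) := by have := (hh_d01 hd j).1; positivity
      have h3 : d j / 2^(j+1) = 0 := le_antisymm h1 h2
      have h4 : (2:ℝ)^(j+1) ≠ 0 := by positivity
      field_simp at h3
      simpa using h3
    have hS : (∑' j : ℕ, ((j:ℝ)+1) * d j / 2^(j+1)) = 0 := by
      rw [tsum_congr (fun j : ℕ => by rw [hz j]; ring_nf : ∀ j : ℕ,
        ((j:ℝ)+1) * d j / 2^(j+1) = 0), tsum_zero]
    rw [hS, ← hx0]; simp
  · have hFnn : ∀ t j, 0 ≤ hhF d t j := fun t j => by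
      unfold hhF; split
      · have := (hh_d01 hd j).1; positivity
      · exact le_refl 0
    have hFle : ∀ t j, hhF d t j ≤ d j / 2^(j+1) := fun t j => by
      unfold hhF; split
      · exact le_refl _
      · have := (hh_d01 hd j).1; positivity
    have hFrow : ∀ t, Summable (hhF d t) := fun t =>
      Summable.of_nonneg_of_le (hFnn t) (hFle t) (hh_sumf hd)
    have hshift_sum : ∀ t : ℕ, Summable (fun m : ℕ => d (m+t) / 2^(m+t+1)) := fun t =>
      (summable_nat_add_iff (f := fun j : ℕ => d j / 2^(j+1)) t).2 (hh_sumf hd)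
    have hrow_eq : ∀ t, (∑' j, hhF d t j) = ∑' m, d (m+t) / 2^(m+t+1) := by
      intro t
      rw [← Summable.sum_add_tsum_nat_add t (hFrow t)]
      have h0 : ∑ i ∈ Finset.range t, hhF d t i = 0 :=
        Finset.sum_eq_zero (fun i hi => by
          unfold hhF; exact if_neg (by simp at hi; omega))
      rw [h0, zero_add]
      exact tsum_congr (fun m => by unfold hhF; exact if_pos (by omega))
    have hrow_le_x : ∀ t, (∑' j, hhF d t j) ≤ x :=
      fun t => Summable.tsum_le_tsum (hFle t) (hFrow t) (hh_sumf hd)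
    have hrow_nonneg : ∀ t, 0 ≤ ∑' j, hhF d t j := fun t => tsum_nonneg (hFnn t)
    have hrow_le_geo : ∀ t, (∑' j, hhF d t j) ≤ ((1:ℝ)/2)^t := by
      intro t
      rw [hrow_eq t]
      have hb : ∀ m : ℕ, d (m+t) / 2^(m+t+1) ≤ ((1:ℝ)/2)^(m+(t+1)) := by
        intro m
        have h1 := (hh_d01 hd (m+t)).2
        calc d (m+t) / 2^(m+t+1) ≤ 1 / 2^(m+t+1) := by gcongr
          _ = ((1:ℝ)/2)^(m+t+1) := by rw [div_pow, one_pow]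
          _ = ((1:ℝ)/2)^(m+(t+1)) := by rw [Nat.add_assoc]
      have h2 := Summable.tsum_le_tsum hb (hshift_sum t)
        ((summable_nat_add_iff (t+1)).2 summable_geometric_two)
      rw [hh_geo_shift (t+1)] at h2
      refine h2.trans (le_of_eq ?_)
      rw [pow_succ]; ring
    have hRsum : Summable (fun t => ∑' j, hhF d t j) :=
      Summable.of_nonneg_of_le hrow_nonneg hrow_le_geo summable_geometric_two
    have hFsum : Summable (Function.uncurry (hhF d)) := by
      exact (summable_prod_of_nonneg (fun p => hFnn p.1 p.2)).2 ⟨hFrow, hRsum⟩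
    have hcol : ∀ j : ℕ, (∑' t, hhF d t j) = ((j:ℝ)+1) * d j / 2^(j+1) := by
      intro j
      rw [tsum_eq_sum (s := Finset.range (j+1)) (fun t ht => by
        unfold hhF; exact if_neg (by simp at ht; omega))]
      rw [Finset.sum_congr rfl (fun t ht => show hhF d t j = d j / 2^(j+1) from by
        unfold hhF; exact if_pos (by simp at ht; omega))]
      rw [Finset.sum_const, Finset.card_range, nsmul_eq_mul]
      push_cast; ring
    have hinter : (∑' j : ℕ, ((j:ℝ)+1) * d j / 2^(j+1)) = ∑' t, ∑' j, hhF d t j :=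
      (tsum_congr hcol).symm.trans (Summable.tsum_comm hFsum)
    set θ := Real.logb 2 (1/x) with hθdef
    have hθ0 : 0 ≤ θ := Real.logb_nonneg one_lt_two (by
      rw [le_div_iff₀ hxpos]; linarith [hh_x_le_one hd])
    set L := ⌈θ⌉₊ with hL
    have hsplit := Summable.sum_add_tsum_nat_add L hRsum
    have hb1 : ∑ i ∈ Finset.range L, (∑' j, hhF d i j) ≤ (L:ℝ) * x := by
      calc ∑ i ∈ Finset.range L, (∑' j, hhF d i j) ≤ ∑ i ∈ Finset.range L, x :=
            Finset.sum_le_sum (fun i _ => hrow_le_x i)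
        _ = (L:ℝ) * x := by rw [Finset.sum_const, Finset.card_range, nsmul_eq_mul]
    have hb2 : (∑' m, ∑' j, hhF d (m+L) j) ≤ 2 * ((1:ℝ)/2)^L := by
      have h3 := Summable.tsum_le_tsum (fun m => hrow_le_geo (m+L)) ((summable_nat_add_iff L).2 hRsum)
        ((summable_nat_add_iff L).2 summable_geometric_two)
      rwa [hh_geo_shift L] at h3
    have hxθ : x = (2:ℝ) ^ (-θ) := by
      rw [hθdef, one_div, Real.logb_inv, neg_neg]
      exact (Real.rpow_logb (by norm_num) (by norm_num) hxpos).symm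
    have hδ0 : 0 ≤ (L:ℝ) - θ := by have := Nat.le_ceil θ; rw [← hL] at this; linarith
    have hδ1 : (L:ℝ) - θ ≤ 1 := by
      have := Nat.ceil_lt_add_one hθ0; rw [← hL] at this; linarith
    have hchord := hh_chord hδ0 hδ1
    have hgeoL : ((1:ℝ)/2)^L = x * (2:ℝ) ^ (-((L:ℝ) - θ)) := by
      rw [hxθ, ← Real.rpow_add (by norm_num)]
      rw [show -θ + -((L:ℝ) - θ) = -(L:ℝ) by ring]
      rw [Real.rpow_neg (by norm_num), Real.rpow_natCast, ← inv_pow]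
      norm_num
    have hrpow_nn : (0:ℝ) ≤ (2:ℝ)^(-((L:ℝ)-θ)) := Real.rpow_nonneg (by norm_num) _
    have hkey : (L:ℝ) * x + 2*((1:ℝ)/2)^L ≤ x * θ + 2 * x := by
      rw [hgeoL]
      nlinarith [hxpos, hchord, hrpow_nn]
    calc (∑' j : ℕ, ((j:ℝ)+1) * d j / 2^(j+1)) = ∑' t, ∑' j, hhF d t j := hinter
      _ = ∑ i ∈ Finset.range L, (∑' j, hhF d i j) + ∑' m, ∑' j, hhF d (m+L) j := hsplit.symm
      _ ≤ (L:ℝ) * x + 2*((1:ℝ)/2)^L := add_le_add hb1 hb2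
      _ ≤ x * θ + 2 * x := hkey

end HH


/-- Han–Hoshi bound: Let `(p_i)` be a probability vector, `α_i + β_i = p_i`
with `α_i, β_i ≥ 0`, and let `a i j` (resp. `c i j`) be the binary digits of `α_i`
(resp. `β_i`).  Then `E(T) = Σ_i Σ_j j·((α_i)_j + (β_i)_j)·2^{−j}` satisfies
`H(p) ≤ E(T) ≤ H(p) + 3`. -/
theorem han_hoshi_bounds
    (p α β : ℕ → ℝ) (hα : ∀ i, 0 ≤ α i) (hβ : ∀ i, 0 ≤ β i)
    (hsplit : ∀ i, α i + β i = p i) (hpsum : HasSum p 1)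
    (a c : ℕ → ℕ → ℝ)
    (ha : ∀ i j, a i j = 0 ∨ a i j = 1) (hc : ∀ i j, c i j = 0 ∨ c i j = 1)
    (haexp : ∀ i, α i = ∑' j : ℕ, a i j / 2 ^ (j + 1))
    (hcexp : ∀ i, β i = ∑' j : ℕ, c i j / 2 ^ (j + 1)) :
    (∑' i : ℕ, p i * Real.logb 2 (1 / p i))
        ≤ (∑' i : ℕ, ∑' j : ℕ, ((j : ℝ) + 1) * (a i j + c i j) / 2 ^ (j + 1)) ∧
      (∑' i : ℕ, ∑' j : ℕ, ((j : ℝ) + 1) * (a i j + c i j) / 2 ^ (j + 1))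
        ≤ (∑' i : ℕ, p i * Real.logb 2 (1 / p i)) + 3 := by
  have hp0 : ∀ i, 0 ≤ p i := fun i => (hsplit i) ▸ add_nonneg (hα i) (hβ i)
  have hp1 : ∀ i, p i ≤ 1 := fun i => le_hasSum hpsum i (fun j _ => hp0 j)
  have hSa : ∀ i, Summable (fun j : ℕ => ((j:ℝ)+1) * a i j / 2^(j+1)) :=
    fun i => hh_sumS (ha i)
  have hSc : ∀ i, Summable (fun j : ℕ => ((j:ℝ)+1) * c i j / 2^(j+1)) :=
    fun i => hh_sumS (hc i)
  have hinner : ∀ i : ℕ, (∑' j : ℕ, ((j:ℝ)+1) * (a i j + c i j) / 2^(j+1))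
      = (∑' j : ℕ, ((j:ℝ)+1) * a i j / 2^(j+1)) + (∑' j : ℕ, ((j:ℝ)+1) * c i j / 2^(j+1)) := by
    intro i
    rw [← Summable.tsum_add (hSa i) (hSc i)]
    exact tsum_congr (fun j => by ring)
  have hlow : ∀ i : ℕ, p i * Real.logb 2 (1/p i)
      ≤ (∑' j : ℕ, ((j:ℝ)+1) * a i j / 2^(j+1)) + (∑' j : ℕ, ((j:ℝ)+1) * c i j / 2^(j+1)) := by
    intro i
    have h1 := hh_lower (ha i)
    have h2 := hh_lower (hc i)
    rw [← haexp i] at h1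
    rw [← hcexp i] at h2
    have h3 : α i * Real.logb 2 (1/p i) ≤ α i * Real.logb 2 (1/α i) :=
      hh_mono (hα i) (by rw [← hsplit i]; linarith [hβ i])
    have h4 : β i * Real.logb 2 (1/p i) ≤ β i * Real.logb 2 (1/β i) :=
      hh_mono (hβ i) (by rw [← hsplit i]; linarith [hα i])
    have h5 : p i * Real.logb 2 (1/p i)
        = α i * Real.logb 2 (1/p i) + β i * Real.logb 2 (1/p i) := by
      rw [← hsplit i]; ring
    linarith
  have hupp : ∀ i : ℕ, (∑' j : ℕ, ((j:ℝ)+1) * a i j / 2^(j+1))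
        + (∑' j : ℕ, ((j:ℝ)+1) * c i j / 2^(j+1))
      ≤ p i * Real.logb 2 (1/p i) + 3 * p i := by
    intro i
    have h1 := hh_upper (ha i)
    have h2 := hh_upper (hc i)
    rw [← haexp i] at h1
    rw [← hcexp i] at h2
    have h3 := hh_split (hα i) (hβ i)
    rw [hsplit i] at h3
    have h6 := hsplit i
    linarith
  have hnn : ∀ i : ℕ, 0 ≤ (∑' j : ℕ, ((j:ℝ)+1) * a i j / 2^(j+1))
      + (∑' j : ℕ, ((j:ℝ)+1) * c i j / 2^(j+1)) := by
    intro i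
    have n1 : (0:ℝ) ≤ ∑' j : ℕ, ((j:ℝ)+1) * a i j / 2^(j+1) :=
      tsum_nonneg (fun j => by have := (hh_d01 (ha i) j).1; positivity)
    have n2 : (0:ℝ) ≤ ∑' j : ℕ, ((j:ℝ)+1) * c i j / 2^(j+1) :=
      tsum_nonneg (fun j => by have := (hh_d01 (hc i) j).1; positivity)
    linarith
  have hplognn : ∀ i : ℕ, 0 ≤ p i * Real.logb 2 (1/p i) := by
    intro i
    rcases eq_or_lt_of_le (hp0 i) with h | h
    · rw [← h]; simp
    · have : (1:ℝ) ≤ 1 / p i := by rw [le_div_iff₀ h]; linarith [hp1 i]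
      have := Real.logb_nonneg one_lt_two this
      positivity
  have hpsummable : Summable p := hpsum.summable
  by_cases hent : Summable (fun i : ℕ => p i * Real.logb 2 (1/p i))
  · have hbsum : Summable (fun i : ℕ => p i * Real.logb 2 (1/p i) + 3 * p i) :=
      hent.add (hpsummable.mul_left 3)
    have hSsum : Summable (fun i : ℕ => (∑' j : ℕ, ((j:ℝ)+1) * a i j / 2^(j+1))
        + (∑' j : ℕ, ((j:ℝ)+1) * c i j / 2^(j+1))) :=
      Summable.of_nonneg_of_le hnn hupp hbsum
    constructor
    · calc (∑' i : ℕ, p i * Real.logb 2 (1 / p i))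
          ≤ ∑' i : ℕ, ((∑' j : ℕ, ((j:ℝ)+1) * a i j / 2^(j+1))
              + (∑' j : ℕ, ((j:ℝ)+1) * c i j / 2^(j+1))) := Summable.tsum_le_tsum hlow hent hSsum
        _ = ∑' i : ℕ, ∑' j : ℕ, ((j : ℝ) + 1) * (a i j + c i j) / 2 ^ (j + 1) :=
            (tsum_congr hinner).symm
    · calc (∑' i : ℕ, ∑' j : ℕ, ((j : ℝ) + 1) * (a i j + c i j) / 2 ^ (j + 1))
          = ∑' i : ℕ, ((∑' j : ℕ, ((j:ℝ)+1) * a i j / 2^(j+1))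
              + (∑' j : ℕ, ((j:ℝ)+1) * c i j / 2^(j+1))) := tsum_congr hinner
        _ ≤ ∑' i : ℕ, (p i * Real.logb 2 (1/p i) + 3 * p i) :=
            Summable.tsum_le_tsum hupp hSsum hbsum
        _ = (∑' i : ℕ, p i * Real.logb 2 (1/p i)) + 3 * ∑' i, p i := by
            rw [Summable.tsum_add hent (hpsummable.mul_left 3), tsum_mul_left]
        _ = (∑' i : ℕ, p i * Real.logb 2 (1 / p i)) + 3 := by rw [hpsum.tsum_eq]; ring
  · have hSnot : ¬ Summable (fun i : ℕ => (∑' j : ℕ, ((j:ℝ)+1) * a i j / 2^(j+1))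
        + (∑' j : ℕ, ((j:ℝ)+1) * c i j / 2^(j+1))) := by
      intro hS
      exact hent (Summable.of_nonneg_of_le hplognn hlow hS)
    have hgoal0 : (∑' i : ℕ, ∑' j : ℕ, ((j : ℝ) + 1) * (a i j + c i j) / 2 ^ (j + 1)) = 0 := by
      rw [tsum_congr hinner]
      exact tsum_eq_zero_of_not_summable hSnot
    have hent0 : (∑' i : ℕ, p i * Real.logb 2 (1 / p i)) = 0 :=
      tsum_eq_zero_of_not_summable hent
    rw [hgoal0, hent0]
    norm_num
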